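/- Let f : ℝ² → ℝ be K-Lipschitz and supported in the closed unit disk, and let θ ∈ ℝ. Then the line projection G(s) = P_θ f(s) is Lipschitz on [−1, 1], differentiable almost everywhere with G'(s) = ∫_ℝ ∇f(s(cos θ, sin θ) + t(−sin θ, cos θ)) · (cos θ, sin θ) dt for a.e. s, and ∫_{-1}^1 |G'(s)|² ds ≤ 2π K², i.e. ‖(P_θ f)'‖_{L²(−1,1)} ≤ √(2π) · K. -/

import Mathlib

open MeasureTheory Real Set

/-- CDF of a density `μ` on `ℝ`: `F_μ(t) = ∫_{-∞}^t μ`. -/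
noncomputable def cdfOf (μ : ℝ → ℝ) (t : ℝ) : ℝ := ∫ x in Set.Iic t, μ x

/-- Quantile function `Q_μ(z) = inf {t : F_μ(t) ≥ z}`. -/
noncomputable def quantileOf (μ : ℝ → ℝ) (z : ℝ) : ℝ := sInf {t : ℝ | z ≤ cdfOf μ t}

/-- `d_{Wp}^p(μ, ν) = ∫₀¹ |Q_μ(z) − Q_ν(z)|^p dz`. -/
noncomputable def wassersteinPow (p : ℝ) (μ ν : ℝ → ℝ) : ℝ :=
  ∫ z in Set.Ioo (0:ℝ) 1, |quantileOf μ z - quantileOf ν z| ^ p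

/-- 1-D `p`-Wasserstein distance between densities. -/
noncomputable def wasserstein (p : ℝ) (μ ν : ℝ → ℝ) : ℝ :=
  (wassersteinPow p μ ν) ^ (1 / p)

/-- Line projection of an image `f : ℝ² → ℝ` at angle `θ`:
`P_θ f(s) = ∫ f(s(cos θ, sin θ) + t(−sin θ, cos θ)) dt`. -/
noncomputable def lineProj (f : ℝ × ℝ → ℝ) (θ : ℝ) (s : ℝ) : ℝ :=
  ∫ t : ℝ, f (s * Real.cos θ - t * Real.sin θ, s * Real.sin θ + t * Real.cos θ)

/-- `d_{SWp}^p(f, g) = (1/2π) ∫₀^{2π} d_{Wp}^p(P_θ f, P_θ g) dθ`. -/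
noncomputable def slicedWassersteinPow (p : ℝ) (f g : ℝ × ℝ → ℝ) : ℝ :=
  (1 / (2 * Real.pi)) * ∫ θ in Set.Ioo (0:ℝ) (2 * Real.pi),
    wassersteinPow p (lineProj f θ) (lineProj g θ)

/-- Sliced `p`-Wasserstein distance between two images. -/
noncomputable def slicedWasserstein (p : ℝ) (f g : ℝ × ℝ → ℝ) : ℝ :=
  (slicedWassersteinPow p f g) ^ (1 / p)

/-- Rotation of an image by angle `α`: `(R_α g)(x) = g(R_α⁻¹ x)`. -/
noncomputable def rotImage (α : ℝ) (g : ℝ × ℝ → ℝ) : ℝ × ℝ → ℝ :=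
  fun x => g (x.1 * Real.cos α + x.2 * Real.sin α, -x.1 * Real.sin α + x.2 * Real.cos α)

/-- Rotation as a linear map on `ℝ × ℝ`. -/
noncomputable def rotLM (c sn : ℝ) : (ℝ × ℝ) →ₗ[ℝ] (ℝ × ℝ) where
  toFun p := (p.1 * c - p.2 * sn, p.1 * sn + p.2 * c)
  map_add' p q := by simp [Prod.ext_iff]; constructor <;> ring
  map_smul' r p := by simp [Prod.ext_iff]; constructor <;> ring

theorem rotLM_det (θ : ℝ) : LinearMap.det (rotLM (Real.cos θ) (Real.sin θ)) = 1 := by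
  rw [← LinearMap.det_toMatrix (Module.Basis.finTwoProd ℝ), Matrix.det_fin_two]
  simp [LinearMap.toMatrix_apply, rotLM, Module.Basis.coe_finTwoProd_repr]
  nlinarith [Real.sin_sq_add_cos_sq θ]

theorem aux_sum_sq (θ s t : ℝ) :
    (s * Real.cos θ - t * Real.sin θ) ^ 2 + (s * Real.sin θ + t * Real.cos θ) ^ 2
      = s ^ 2 + t ^ 2 := by
  linear_combination (s ^ 2 + t ^ 2) * (Real.sin_sq_add_cos_sq θ)

section Aux

variable (f : ℝ × ℝ → ℝ) (K : ℝ)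
    (hlip : ∀ x y : ℝ × ℝ,
      |f x - f y| ≤ K * Real.sqrt ((x.1 - y.1) ^ 2 + (x.2 - y.2) ^ 2))

include hlip

theorem aux_K_nonneg : 0 ≤ K := by
  have h := hlip (1, 0) (0, 0)
  have h2 : Real.sqrt (((1:ℝ) - 0) ^ 2 + ((0:ℝ) - 0) ^ 2) = 1 := by
    norm_num
  simp only [h2] at h
  have := abs_nonneg (f (1, 0) - f (0, 0))
  linarith [h]

theorem aux_lipf : LipschitzWith (K * Real.sqrt 2).toNNReal f := by
  have hK : 0 ≤ K := aux_K_nonneg f K hlip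
  apply LipschitzWith.of_dist_le_mul
  intro x y
  have hmax : (0:ℝ) ≤ max (dist x.1 y.1) (dist x.2 y.2) :=
    le_trans dist_nonneg (le_max_left _ _)
  have h1 : Real.sqrt ((x.1 - y.1) ^ 2 + (x.2 - y.2) ^ 2)
      ≤ Real.sqrt 2 * max (dist x.1 y.1) (dist x.2 y.2) := by
    rw [← Real.sqrt_sq hmax, ← Real.sqrt_mul (by norm_num : (0:ℝ) ≤ 2)]
    apply Real.sqrt_le_sqrt
    have ha : |x.1 - y.1| ≤ max (dist x.1 y.1) (dist x.2 y.2) := by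
      rw [← Real.dist_eq]; exact le_max_left _ _
    have hb : |x.2 - y.2| ≤ max (dist x.1 y.1) (dist x.2 y.2) := by
      rw [← Real.dist_eq]; exact le_max_right _ _
    nlinarith [abs_nonneg (x.1 - y.1), abs_nonneg (x.2 - y.2), sq_abs (x.1 - y.1),
      sq_abs (x.2 - y.2)]
  have h0 : 0 ≤ K * Real.sqrt 2 := mul_nonneg hK (Real.sqrt_nonneg 2)
  calc dist (f x) (f y) = |f x - f y| := by rw [Real.dist_eq]
    _ ≤ K * Real.sqrt ((x.1 - y.1) ^ 2 + (x.2 - y.2) ^ 2) := hlip x y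
    _ ≤ K * (Real.sqrt 2 * max (dist x.1 y.1) (dist x.2 y.2)) := by
        exact mul_le_mul_of_nonneg_left h1 hK
    _ = (K * Real.sqrt 2).toNNReal * dist x y := by
        rw [Real.coe_toNNReal _ h0, Prod.dist_eq]; ring

theorem aux_slice_lip (θ t s s' : ℝ) :
    |f (s * Real.cos θ - t * Real.sin θ, s * Real.sin θ + t * Real.cos θ)
      - f (s' * Real.cos θ - t * Real.sin θ, s' * Real.sin θ + t * Real.cos θ)|
      ≤ K * |s - s'| := by
  have h := hlip (s * Real.cos θ - t * Real.sin θ, s * Real.sin θ + t * Real.cos θ)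
    (s' * Real.cos θ - t * Real.sin θ, s' * Real.sin θ + t * Real.cos θ)
  simp only at h
  have he : ((s * Real.cos θ - t * Real.sin θ) - (s' * Real.cos θ - t * Real.sin θ)) ^ 2
      + ((s * Real.sin θ + t * Real.cos θ) - (s' * Real.sin θ + t * Real.cos θ)) ^ 2
      = (s - s') ^ 2 := by
    linear_combination (s - s') ^ 2 * (Real.sin_sq_add_cos_sq θ)
  rw [he, Real.sqrt_sq_eq_abs] at h
  exact h

theorem aux_dirbound (θ : ℝ) (x : ℝ × ℝ) :
    |fderiv ℝ f x (Real.cos θ, Real.sin θ)| ≤ K := by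
  have hK : 0 ≤ K := aux_K_nonneg f K hlip
  by_cases hd : DifferentiableAt ℝ f x
  · set v : ℝ × ℝ := (Real.cos θ, Real.sin θ) with hv
    have h1 : HasDerivAt (fun r : ℝ => x + r • v) v 0 := by
      simpa using ((hasDerivAt_id (0:ℝ)).smul_const v).const_add x
    have h2 : HasDerivAt (fun r : ℝ => f (x + r • v)) (fderiv ℝ f x v) 0 := by
      exact HasFDerivAt.comp_hasDerivAt 0 (by simpa using hd.hasFDerivAt) h1
    have hlip1 : LipschitzWith K.toNNReal (fun r : ℝ => f (x + r • v)) := by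
      apply LipschitzWith.of_dist_le_mul
      intro a b
      have h := hlip (x + a • v) (x + b • v)
      have he : ((x + a • v).1 - (x + b • v).1) ^ 2 + ((x + a • v).2 - (x + b • v).2) ^ 2
          = (a - b) ^ 2 := by
        simp only [hv, Prod.fst_add, Prod.snd_add, Prod.smul_fst, Prod.smul_snd, smul_eq_mul]
        linear_combination (a - b) ^ 2 * (Real.sin_sq_add_cos_sq θ)
      rw [he, Real.sqrt_sq_eq_abs] at h
      rw [Real.dist_eq, Real.dist_eq, Real.coe_toNNReal _ hK]
      exact h
    have h3 := h2.hasFDerivAt.le_of_lipschitz hlip1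
    rw [Real.coe_toNNReal _ hK] at h3
    calc |fderiv ℝ f x v| = ‖ContinuousLinearMap.smulRight (1 : ℝ →L[ℝ] ℝ) (fderiv ℝ f x v)‖ := by
          rw [ContinuousLinearMap.norm_smulRight_apply]; simp
      _ ≤ K := h3
  · rw [fderiv_zero_of_not_differentiableAt hd]
    simpa using hK

end Aux

theorem aux_fderiv_zero (f : ℝ × ℝ → ℝ)
    (hsupp : ∀ x : ℝ × ℝ, 1 < x.1 ^ 2 + x.2 ^ 2 → f x = 0)
    (x : ℝ × ℝ) (hx : 1 < x.1 ^ 2 + x.2 ^ 2) : fderiv ℝ f x = 0 := by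
  have hop : IsOpen {y : ℝ × ℝ | 1 < y.1 ^ 2 + y.2 ^ 2} := by
    have : Continuous fun y : ℝ × ℝ => y.1 ^ 2 + y.2 ^ 2 := by fun_prop
    exact isOpen_lt continuous_const this
  have hev : f =ᶠ[nhds x] (fun _ => (0:ℝ)) := by
    filter_upwards [hop.mem_nhds hx] with y hy
    exact hsupp y hy
  rw [hev.fderiv_eq, fderiv_fun_const]
  rfl

/-- If `f : ℝ² → ℝ` is `K`-Lipschitz and supported in the closed unit disk, then
`G = P_θ f` is Lipschitz on `[−1, 1]`, differentiable a.e. on `[−1, 1]` with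
`G'(s) = ∫ ∇f(s(cos θ, sin θ) + t(−sin θ, cos θ)) · (cos θ, sin θ) dt`, and
`∫_{-1}^1 |G'(s)|² ds ≤ 2π K²`. -/
theorem lineProj_deriv_L2_bound
    (f : ℝ × ℝ → ℝ) (K : ℝ)
    (hlip : ∀ x y : ℝ × ℝ,
      |f x - f y| ≤ K * Real.sqrt ((x.1 - y.1) ^ 2 + (x.2 - y.2) ^ 2))
    (hsupp : ∀ x : ℝ × ℝ, 1 < x.1 ^ 2 + x.2 ^ 2 → f x = 0)
    (θ : ℝ) :
    (∃ C : NNReal, LipschitzOnWith C (lineProj f θ) (Set.Icc (-1:ℝ) 1)) ∧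
    (∀ᵐ s ∂(volume.restrict (Set.Icc (-1:ℝ) 1)),
      HasDerivAt (lineProj f θ)
        (∫ t : ℝ, fderiv ℝ f (s * Real.cos θ - t * Real.sin θ, s * Real.sin θ + t * Real.cos θ)
          (Real.cos θ, Real.sin θ)) s) ∧
    ∫ s in (-1:ℝ)..1,
        (∫ t : ℝ, fderiv ℝ f (s * Real.cos θ - t * Real.sin θ, s * Real.sin θ + t * Real.cos θ)
          (Real.cos θ, Real.sin θ)) ^ 2
      ≤ 2 * π * K ^ 2 := by
  have hK : 0 ≤ K := aux_K_nonneg f K hlip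
  have hzero : ∀ s t : ℝ, (1:ℝ) < s ^ 2 + t ^ 2 →
      f (s * Real.cos θ - t * Real.sin θ, s * Real.sin θ + t * Real.cos θ) = 0 := by
    intro s t h
    exact hsupp _ (by simpa only [aux_sum_sq] using h)
  have hgzero : ∀ s t : ℝ, (1:ℝ) < s ^ 2 + t ^ 2 →
      fderiv ℝ f (s * Real.cos θ - t * Real.sin θ, s * Real.sin θ + t * Real.cos θ) = 0 := by
    intro s t h
    exact aux_fderiv_zero f hsupp _ (by simpa only [aux_sum_sq] using h)
  have hgb : ∀ s t : ℝ,
      |fderiv ℝ f (s * Real.cos θ - t * Real.sin θ, s * Real.sin θ + t * Real.cos θ)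
        (Real.cos θ, Real.sin θ)| ≤ K := fun s t => aux_dirbound f K hlip θ _
  have hFint : ∀ s : ℝ, Integrable
      (fun t : ℝ => f (s * Real.cos θ - t * Real.sin θ, s * Real.sin θ + t * Real.cos θ)) := by
    intro s
    apply Continuous.integrable_of_hasCompactSupport
    · exact (aux_lipf f K hlip).continuous.comp (by fun_prop)
    · apply HasCompactSupport.intro (isCompact_Icc (a := (-1:ℝ)) (b := 1))
      intro t ht
      apply hzero s t
      simp only [mem_Icc, not_and_or, not_le] at ht
      rcases ht with h | h <;> nlinarith [sq_nonneg s]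
  have hindint : ∀ r C : ℝ, Integrable (Set.indicator (Icc (-r) r) (fun _ => C)) volume := by
    intro r C
    exact (integrableOn_const measure_Icc_lt_top.ne).integrable_indicator
      measurableSet_Icc
  have habs : ∀ s r : ℝ, 0 ≤ r → (∀ t : ℝ, r < |t| → (1:ℝ) < s ^ 2 + t ^ 2) →
      |∫ t : ℝ, fderiv ℝ f (s * Real.cos θ - t * Real.sin θ, s * Real.sin θ + t * Real.cos θ)
        (Real.cos θ, Real.sin θ)| ≤ K * (2 * r) := by
    intro s r hr hcond
    have hpt : ∀ t : ℝ, ‖fderiv ℝ f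
        (s * Real.cos θ - t * Real.sin θ, s * Real.sin θ + t * Real.cos θ)
        (Real.cos θ, Real.sin θ)‖ ≤ Set.indicator (Icc (-r) r) (fun _ => K) t := by
      intro t
      by_cases ht : t ∈ Icc (-r) r
      · rw [indicator_of_mem ht, Real.norm_eq_abs]
        exact hgb s t
      · rw [indicator_of_notMem ht]
        have habs_t : r < |t| := by
          simp only [mem_Icc, not_and_or, not_le] at ht
          rcases ht with h | h
          · exact lt_of_lt_of_le (by linarith) (neg_le_abs t)
          · exact lt_of_lt_of_le h (le_abs_self t)
        rw [hgzero s t (hcond t habs_t)]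
        simp
    have hb := norm_integral_le_of_norm_le (hindint r K)
      (Filter.Eventually.of_forall hpt)
    rw [Real.norm_eq_abs] at hb
    refine hb.trans ?_
    rw [integral_indicator_const _ measurableSet_Icc, Real.volume_real_Icc_of_le (by linarith), smul_eq_mul]
    ring_nf
    exact le_of_eq (by ring)
  refine ⟨⟨(2 * K).toNNReal, ?_⟩, ?_, ?_⟩
  · -- Lipschitz part
    apply LipschitzOnWith.of_dist_le_mul
    intro x _ y _
    have hsub : dist (lineProj f θ x) (lineProj f θ y)
        = |∫ t : ℝ, (f (x * Real.cos θ - t * Real.sin θ, x * Real.sin θ + t * Real.cos θ)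
            - f (y * Real.cos θ - t * Real.sin θ, y * Real.sin θ + t * Real.cos θ))| := by
      rw [Real.dist_eq]
      unfold lineProj
      rw [integral_sub (hFint x) (hFint y)]
    rw [hsub]
    have hpt : ∀ t : ℝ,
        ‖f (x * Real.cos θ - t * Real.sin θ, x * Real.sin θ + t * Real.cos θ)
          - f (y * Real.cos θ - t * Real.sin θ, y * Real.sin θ + t * Real.cos θ)‖
          ≤ Set.indicator (Icc (-1:ℝ) 1) (fun _ => K * |x - y|) t := by
      intro t
      by_cases ht : t ∈ Icc (-1:ℝ) 1
      · rw [indicator_of_mem ht, Real.norm_eq_abs]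
        exact aux_slice_lip f K hlip θ t x y
      · rw [indicator_of_notMem ht]
        have h1 : (1:ℝ) < t ^ 2 := by
          simp only [mem_Icc, not_and_or, not_le] at ht
          rcases ht with h | h <;> nlinarith
        rw [hzero x t (by nlinarith [sq_nonneg x]), hzero y t (by nlinarith [sq_nonneg y])]
        simp
    have hb := norm_integral_le_of_norm_le (hindint 1 (K * |x - y|))
      (Filter.Eventually.of_forall hpt)
    rw [Real.norm_eq_abs] at hb
    refine hb.trans ?_
    rw [integral_indicator_const _ measurableSet_Icc, Real.volume_real_Icc_of_le (by norm_num), smul_eq_mul]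
    rw [Real.coe_toNNReal _ (by linarith), Real.dist_eq]
    ring_nf
    exact le_of_eq (by ring)
  · -- a.e. differentiability part
    apply ae_restrict_of_ae
    have hae : ∀ᵐ x : ℝ × ℝ ∂volume, DifferentiableAt ℝ f x :=
      (aux_lipf f K hlip).ae_differentiableAt
    set N : Set (ℝ × ℝ) := {x | ¬ DifferentiableAt ℝ f x} with hN
    have hN0 : volume N = 0 := by
      simpa [hN, ae_iff] using hae
    have hpre : volume ((rotLM (Real.cos θ) (Real.sin θ)) ⁻¹' N) = 0 := by
      have hd : LinearMap.det (rotLM (Real.cos θ) (Real.sin θ)) ≠ 0 := by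
        rw [rotLM_det]; norm_num
      rw [MeasureTheory.Measure.addHaar_preimage_linearMap volume hd, hN0, mul_zero]
    have hprod : ∀ᵐ p : ℝ × ℝ ∂((volume : Measure ℝ).prod volume),
        DifferentiableAt ℝ f
          (p.1 * Real.cos θ - p.2 * Real.sin θ, p.1 * Real.sin θ + p.2 * Real.cos θ) := by
      rw [← Measure.volume_eq_prod, ae_iff]
      exact hpre
    have hfub := Measure.ae_ae_of_ae_prod hprod
    filter_upwards [hfub] with s hs
    have key := hasDerivAt_integral_of_dominated_loc_of_lip
      (F := fun x t => f (x * Real.cos θ - t * Real.sin θ, x * Real.sin θ + t * Real.cos θ))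
      (F' := fun t => fderiv ℝ f
        (s * Real.cos θ - t * Real.sin θ, s * Real.sin θ + t * Real.cos θ)
        (Real.cos θ, Real.sin θ))
      (x₀ := s) (bound := Set.indicator (Icc (-1:ℝ) 1) (fun _ => K)) (s := Metric.ball s 1) (Metric.ball_mem_nhds s one_pos)
      (Filter.Eventually.of_forall (fun x => (hFint x).aestronglyMeasurable))
      (hFint s)
      (((measurable_fderiv_apply_const ℝ f _).comp
        (by fun_prop : Measurable (fun t : ℝ =>
          ((s * Real.cos θ - t * Real.sin θ, s * Real.sin θ + t * Real.cos θ) : ℝ × ℝ)))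
        ).aestronglyMeasurable)
      ?_ (hindint 1 K) ?_
    · exact key.2
    · apply Filter.Eventually.of_forall
      intro t
      by_cases ht : t ∈ Icc (-1:ℝ) 1
      · rw [indicator_of_mem ht]
        apply LipschitzOnWith.of_dist_le_mul
        intro a _ b _
        beta_reduce
        rw [Real.dist_eq, Real.dist_eq, Real.coe_nnabs, abs_of_nonneg hK]
        exact aux_slice_lip f K hlip θ t a b
      · rw [indicator_of_notMem ht]
        have h1 : (1:ℝ) < t ^ 2 := by
          simp only [mem_Icc, not_and_or, not_le] at ht
          rcases ht with h | h <;> nlinarith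
        apply LipschitzOnWith.of_dist_le_mul
        intro a _ b _
        beta_reduce
        rw [hzero a t (by nlinarith [sq_nonneg a]), hzero b t (by nlinarith [sq_nonneg b])]
        simp
    · filter_upwards [hs] with t hd
      have hφd : HasDerivAt
          (fun x : ℝ => ((x * Real.cos θ - t * Real.sin θ, x * Real.sin θ + t * Real.cos θ) : ℝ × ℝ))
          (Real.cos θ, Real.sin θ) s := by
        have h1 : HasDerivAt (fun x : ℝ => x * Real.cos θ - t * Real.sin θ) (Real.cos θ) s := by
          simpa using ((hasDerivAt_id s).mul_const (Real.cos θ)).sub_const (t * Real.sin θ)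
        have h2 : HasDerivAt (fun x : ℝ => x * Real.sin θ + t * Real.cos θ) (Real.sin θ) s := by
          simpa using ((hasDerivAt_id s).mul_const (Real.sin θ)).add_const (t * Real.cos θ)
        exact h1.prodMk h2
      exact HasFDerivAt.comp_hasDerivAt s hd.hasFDerivAt hφd
  · -- L² bound part
    have hsm : StronglyMeasurable (fun s : ℝ => ∫ t : ℝ,
        fderiv ℝ f (s * Real.cos θ - t * Real.sin θ, s * Real.sin θ + t * Real.cos θ)
          (Real.cos θ, Real.sin θ)) := by
      apply MeasureTheory.StronglyMeasurable.integral_prod_right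
        (f := fun s t => fderiv ℝ f
          (s * Real.cos θ - t * Real.sin θ, s * Real.sin θ + t * Real.cos θ)
          (Real.cos θ, Real.sin θ))
      exact ((measurable_fderiv_apply_const ℝ f _).comp
        (by fun_prop : Measurable (fun p : ℝ × ℝ =>
          ((p.1 * Real.cos θ - p.2 * Real.sin θ, p.1 * Real.sin θ + p.2 * Real.cos θ) : ℝ × ℝ)))
        ).stronglyMeasurable
    have hGb : ∀ s : ℝ, |∫ t : ℝ,
        fderiv ℝ f (s * Real.cos θ - t * Real.sin θ, s * Real.sin θ + t * Real.cos θ)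
          (Real.cos θ, Real.sin θ)| ≤ K * 2 := by
      intro s
      have h := habs s 1 zero_le_one (fun t ht => by nlinarith [sq_abs t, sq_nonneg s, abs_nonneg t])
      simpa using h
    have hInt1 : IntervalIntegrable (fun s : ℝ => (∫ t : ℝ,
        fderiv ℝ f (s * Real.cos θ - t * Real.sin θ, s * Real.sin θ + t * Real.cos θ)
          (Real.cos θ, Real.sin θ)) ^ 2) volume (-1) 1 := by
      rw [intervalIntegrable_iff, uIoc_of_le (by norm_num : (-1:ℝ) ≤ 1)]
      refine Measure.integrableOn_of_bounded (M := (K * 2) ^ 2) measure_Ioc_lt_top.ne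
        ((hsm.measurable.pow_const 2).aestronglyMeasurable) ?_
      apply ae_of_all
      intro s
      rw [Real.norm_eq_abs, abs_of_nonneg (sq_nonneg _)]
      calc (∫ t : ℝ, fderiv ℝ f
              (s * Real.cos θ - t * Real.sin θ, s * Real.sin θ + t * Real.cos θ)
              (Real.cos θ, Real.sin θ)) ^ 2
            = |∫ t : ℝ, fderiv ℝ f
              (s * Real.cos θ - t * Real.sin θ, s * Real.sin θ + t * Real.cos θ)
              (Real.cos θ, Real.sin θ)| ^ 2 := (sq_abs _).symm
          _ ≤ (K * 2) ^ 2 := by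
              have := hGb s
              nlinarith [abs_nonneg (∫ t : ℝ, fderiv ℝ f
                (s * Real.cos θ - t * Real.sin θ, s * Real.sin θ + t * Real.cos θ)
                (Real.cos θ, Real.sin θ))]
    have hInt2 : IntervalIntegrable (fun s : ℝ => 4 * K ^ 2 * (1 - s ^ 2)) volume (-1) 1 :=
      (Continuous.intervalIntegrable (by fun_prop) _ _)
    have hmono := intervalIntegral.integral_mono_on (by norm_num : (-1:ℝ) ≤ 1) hInt1 hInt2 ?_
    · refine hmono.trans ?_
      have hval : (∫ s in (-1:ℝ)..1, 4 * K ^ 2 * (1 - s ^ 2)) = 4 * K ^ 2 * (4 / 3) := by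
        rw [intervalIntegral.integral_const_mul]
        congr 1
        rw [intervalIntegral.integral_sub intervalIntegrable_const
          (intervalIntegral.intervalIntegrable_pow 2)]
        simp [integral_pow]
        norm_num
      rw [hval]
      nlinarith [Real.pi_gt_three, sq_nonneg K]
    · intro s hsmem
      rw [mem_Icc] at hsmem
      set r : ℝ := Real.sqrt (1 - s ^ 2) with hr
      have hr0 : 0 ≤ r := Real.sqrt_nonneg _
      have hr2 : r ^ 2 = 1 - s ^ 2 := Real.sq_sqrt (by nlinarith [hsmem.1, hsmem.2])
      have hcond : ∀ t : ℝ, r < |t| → (1:ℝ) < s ^ 2 + t ^ 2 := by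
        intro t ht
        nlinarith [sq_abs t, abs_nonneg t]
      have h4 := habs s r hr0 hcond
      nlinarith [sq_abs (∫ t : ℝ, fderiv ℝ f
        (s * Real.cos θ - t * Real.sin θ, s * Real.sin θ + t * Real.cos θ)
        (Real.cos θ, Real.sin θ)), abs_nonneg (∫ t : ℝ, fderiv ℝ f
        (s * Real.cos θ - t * Real.sin θ, s * Real.sin θ + t * Real.cos θ)
        (Real.cos θ, Real.sin θ)), hr0, hr2, hK]
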